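/- Let M be a natural number and let S and T be multisets of real numbers, each of cardinality M. If for every j with 1 ≤ j ≤ M the power sums agree, Σ_{s ∈ S} s^j = Σ_{t ∈ T} t^j, then S = T. (Equivalently, the continuous map φ(s) = (s, s², …, s^M) yields an injective sum-decomposition S ↦ Σ_{s ∈ S} φ(s) ∈ ℝ^M on multisets of reals of cardinality M, so latent dimension M suffices for continuous injective multiset encodings.) -/

import Mathlib

open Polynomial Finset

/-- Newton's identity specialized to a multiset of reals. -/
lemma multiset_newton (s : Multiset ℝ) (k : ℕ) :
    (k : ℝ) * s.esymm k = (-1) ^ (k + 1) *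
      ∑ a ∈ Finset.HasAntidiagonal.antidiagonal k with a.1 < k,
        (-1) ^ a.1 * s.esymm a.1 * (s.map (fun x => x ^ a.2)).sum := by
  classical
  set l := s.toList with hl
  have hs : s = (l : Multiset ℝ) := (Multiset.coe_toList s).symm
  set f : Fin l.length → ℝ := l.get with hf
  have huniv : (Finset.univ.val.map f : Multiset ℝ) = s := by
    have : (Finset.univ : Finset (Fin l.length)).val = ↑(List.finRange l.length) := rfl
    rw [this]
    rw [show Multiset.map f ↑(List.finRange l.length) = ↑((List.finRange l.length).map f) from rfl]
    rw [← List.ofFn_eq_map, hf, List.ofFn_get]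
    exact hs.symm
  have key := congrArg (MvPolynomial.aeval f) (MvPolynomial.mul_esymm_eq_sum (Fin l.length) ℝ k)
  have haevalp : ∀ n : ℕ, MvPolynomial.aeval f (MvPolynomial.psum (Fin l.length) ℝ n)
      = (s.map (fun x => x ^ n)).sum := by
    intro n
    rw [MvPolynomial.psum, map_sum]
    simp only [map_pow, MvPolynomial.aeval_X]
    rw [← huniv, Multiset.map_map]
    rfl
  have haevale : ∀ n : ℕ, MvPolynomial.aeval f (MvPolynomial.esymm (Fin l.length) ℝ n)
      = s.esymm n := by
    intro n
    rw [MvPolynomial.aeval_esymm_eq_multiset_esymm, huniv]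
  simp only [map_mul, map_sum, map_pow, map_natCast, map_neg, map_one,
    haevalp, haevale] at key
  exact key

lemma esymm_eq_of_power_sums (M : ℕ) (S T : Multiset ℝ)
    (hS : Multiset.card S = M) (hT : Multiset.card T = M)
    (h : ∀ j : ℕ, 1 ≤ j → j ≤ M →
      (S.map (fun s => s ^ j)).sum = (T.map (fun t => t ^ j)).sum) :
    ∀ k : ℕ, k ≤ M → S.esymm k = T.esymm k := by
  intro k
  induction k using Nat.strong_induction_on with
  | _ k ih =>
    intro hkM
    rcases Nat.eq_zero_or_pos k with hk0 | hkpos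
    · subst hk0; simp [Multiset.esymm]
    · have hps : ∀ j : ℕ, j ≤ k → (S.map (fun s => s ^ j)).sum = (T.map (fun t => t ^ j)).sum := by
        intro j hj
        rcases Nat.eq_zero_or_pos j with hj0 | hjpos
        · subst hj0; simp [hS, hT]
        · exact h j hjpos (hj.trans hkM)
      have hNS := multiset_newton S k
      have hNT := multiset_newton T k
      have hsum : ∑ a ∈ Finset.HasAntidiagonal.antidiagonal k with a.1 < k,
            (-1 : ℝ) ^ a.1 * S.esymm a.1 * (S.map (fun x => x ^ a.2)).sum
          = ∑ a ∈ Finset.HasAntidiagonal.antidiagonal k with a.1 < k,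
            (-1 : ℝ) ^ a.1 * T.esymm a.1 * (T.map (fun x => x ^ a.2)).sum := by
        apply Finset.sum_congr rfl
        intro a ha
        simp only [Finset.mem_filter, Finset.HasAntidiagonal.mem_antidiagonal] at ha
        rw [ih a.1 ha.2 (le_trans (le_of_lt ha.2) hkM),
          hps a.2 (by omega)]
      have : (k : ℝ) * S.esymm k = (k : ℝ) * T.esymm k := by
        rw [hNS, hNT, hsum]
      have hk : (k : ℝ) ≠ 0 := Nat.cast_ne_zero.mpr hkpos.ne'
      exact mul_left_cancel₀ hk this

/-- Multisets of reals of cardinality `M` are determined by their first `M` power sums: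
if `Σ_{s ∈ S} s^j = Σ_{t ∈ T} t^j` for all `1 ≤ j ≤ M`, then `S = T`.  Equivalently, the
continuous map `φ(s) = (s, s², …, s^M)` gives an injective sum-decomposition of multisets
of reals of cardinality `M` with latent dimension `M`. -/
theorem multiset_eq_of_power_sums_eq (M : ℕ) (S T : Multiset ℝ)
    (hS : Multiset.card S = M) (hT : Multiset.card T = M)
    (h : ∀ j : ℕ, 1 ≤ j → j ≤ M →
      (S.map (fun s => s ^ j)).sum = (T.map (fun t => t ^ j)).sum) :
    S = T := by
  have hesymm := esymm_eq_of_power_sums M S T hS hT h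
  have hprod : (S.map fun t => (X : ℝ[X]) - C t).prod = (T.map fun t => (X : ℝ[X]) - C t).prod := by
    rw [Multiset.prod_X_sub_X_eq_sum_esymm, Multiset.prod_X_sub_X_eq_sum_esymm, hS, hT]
    apply Finset.sum_congr rfl
    intro j hj
    rw [Finset.mem_range] at hj
    rw [hesymm j (by omega)]
  have := congrArg Polynomial.roots hprod
  rwa [Polynomial.roots_multiset_prod_X_sub_C, Polynomial.roots_multiset_prod_X_sub_C] at this
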